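/- Let γ ∈ [0,1), C ≥ 0, and β ≥ 2 be real numbers, and set λ_t = 2/((1−γ)(t+β)) and ζ = 4C/(1−γ)². Let (Δ_t)_{t∈ℕ} be a sequence of nonnegative reals with Δ₀ ≤ ζ/β and Δ_{t+1} ≤ (1 − (1−γ)λ_t) Δ_t + C λ_t² for all t ∈ ℕ. Then Δ_t ≤ ζ/(t+β) for all t ∈ ℕ. -/
import Mathlib


/-- Scalar recursion lemma. Let `γ ∈ [0,1)`, `C ≥ 0`, `β ≥ 2`,
`λ_t = 2/((1−γ)(t+β))`, `ζ = 4C/(1−γ)²`. If `(Δ_t)` is a sequence of nonnegative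
reals with `Δ₀ ≤ ζ/β` and `Δ_{t+1} ≤ (1 − (1−γ)λ_t)Δ_t + Cλ_t²`, then
`Δ_t ≤ ζ/(t+β)` for all `t`. -/
theorem stmt_9 (γ C β : ℝ) (hγ0 : 0 ≤ γ) (hγ1 : γ < 1) (hC : 0 ≤ C) (hβ : 2 ≤ β)
    (lam : ℕ → ℝ) (hlam : ∀ t : ℕ, lam t = 2 / ((1 - γ) * ((t : ℝ) + β)))
    (ζ : ℝ) (hζ : ζ = 4 * C / (1 - γ) ^ 2)
    (Δ : ℕ → ℝ) (hΔpos : ∀ t, 0 ≤ Δ t) (hinit : Δ 0 ≤ ζ / β)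
    (hrec : ∀ t : ℕ, Δ (t + 1) ≤ (1 - (1 - γ) * lam t) * Δ t + C * (lam t) ^ 2) :
    ∀ t : ℕ, Δ t ≤ ζ / ((t : ℝ) + β) := by
  have hg : (0:ℝ) < 1 - γ := by linarith
  have hζ0 : 0 ≤ ζ := by
    rw [hζ]; positivity
  intro t
  induction t with
  | zero => simpa using hinit
  | succ t ih =>
    set a : ℝ := (t : ℝ) + β with ha
    have ha2 : (2:ℝ) ≤ a := by
      have : (0:ℝ) ≤ (t:ℝ) := Nat.cast_nonneg t
      simp [ha]; linarith
    have ha0 : (0:ℝ) < a := by linarith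
    have hcontr : 1 - (1 - γ) * lam t = (a - 2) / a := by
      rw [hlam]
      field_simp
      ring
    have hCl : C * (lam t) ^ 2 = ζ / a ^ 2 := by
      rw [hlam, hζ]
      rw [div_pow]
      field_simp
      ring
    have step : Δ (t + 1) ≤ (a - 2) / a * (ζ / a) + ζ / a ^ 2 := by
      calc Δ (t + 1) ≤ (1 - (1 - γ) * lam t) * Δ t + C * (lam t) ^ 2 := hrec t
        _ ≤ (a - 2) / a * (ζ / a) + ζ / a ^ 2 := by
            rw [hcontr, hCl]
            have hcoef : 0 ≤ (a - 2) / a := div_nonneg (by linarith) ha0.le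
            have := mul_le_mul_of_nonneg_left ih hcoef
            linarith
    have key : (a - 2) / a * (ζ / a) + ζ / a ^ 2 ≤ ζ / (a + 1) := by
      have h1 : (a - 2) / a * (ζ / a) + ζ / a ^ 2 = ζ * (a - 1) / a ^ 2 := by
        field_simp; ring
      rw [h1, div_le_div_iff₀ (by positivity) (by linarith : (0:ℝ) < a + 1)]
      nlinarith [sq_nonneg a]
    have : ((t:ℝ) + 1) + β = a + 1 := by push_cast [ha]; ring
    rw [show ((t+1 : ℕ):ℝ) = (t:ℝ) + 1 by push_cast; ring, this]
    exact step.trans key
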